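/- Fix p ≥ 1 and for x ≥ 1 let μ_x = (1 - 1/x^p)·δ₀ + (1/x^p)·δ_x ∈ P_p([0,∞)). For every s ∈ [0,2) there exists a unique x ≥ 1 with W_p^p(δ₁, μ_x) = s; moreover, for every x > 1 one has W_p^p(μ_x, δ₁) = W_p^p(μ_x, μ_{x²}). -/

import Mathlib

open MeasureTheory
open scoped NNReal

/-- The `p`-Wasserstein distance associated to a cost (distance) function `d`. -/
noncomputable def Wp {Z : Type*} [MeasurableSpace Z] (d : Z → Z → ℝ) (p : ℝ)
    (μ ν : Measure Z) : ℝ :=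
  sInf {c : ℝ | ∃ γ : Measure (Z × Z), IsProbabilityMeasure γ ∧
    γ.map Prod.fst = μ ∧ γ.map Prod.snd = ν ∧
    c = (∫ z, d z.1 z.2 ^ p ∂γ) ^ (1 / p)}

/-- The measure `μ_x = (1 - 1/x^p)·δ₀ + (1/x^p)·δ_x` on `[0,∞)`. -/
noncomputable def muX (p : ℝ) (x : ℝ≥0) : Measure ℝ≥0 :=
  (1 - ENNReal.ofReal (((x : ℝ) ^ p)⁻¹)) • Measure.dirac 0 +
    ENNReal.ofReal (((x : ℝ) ^ p)⁻¹) • Measure.dirac x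

open Set Filter
open scoped Topology ENNReal

section Aux

lemma integrable_dirac' {α : Type*} [MeasurableSpace α] [MeasurableSingletonClass α]
    (a : α) (f : α → ℝ) : Integrable f (Measure.dirac a) := by
  refine (integrable_const (f a)).congr ?_
  rw [Filter.EventuallyEq, MeasureTheory.ae_dirac_eq]
  simp

lemma integral_two_point {α : Type*} [MeasurableSpace α] [MeasurableSingletonClass α]
    (a b : α) (c d : ℝ≥0∞) (hc : c ≠ ⊤) (hd : d ≠ ⊤) (f : α → ℝ) :
    (∫ z, f z ∂(c • Measure.dirac a + d • Measure.dirac b))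
      = c.toReal * f a + d.toReal * f b := by
  rw [integral_add_measure ((integrable_dirac' a f).smul_measure hc)
      ((integrable_dirac' b f).smul_measure hd),
    integral_smul_measure, integral_smul_measure, integral_dirac, integral_dirac]
  simp [smul_eq_mul]

lemma integral_three_point {α : Type*} [MeasurableSpace α] [MeasurableSingletonClass α]
    (a b c : α) (u v w : ℝ≥0∞) (hu : u ≠ ⊤) (hv : v ≠ ⊤) (hw : w ≠ ⊤) (f : α → ℝ) :
    (∫ z, f z ∂(u • Measure.dirac a + (v • Measure.dirac b + w • Measure.dirac c)))
      = u.toReal * f a + (v.toReal * f b + w.toReal * f c) := by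
  rw [integral_add_measure ((integrable_dirac' a f).smul_measure hu)
      (((integrable_dirac' b f).smul_measure hv).add_measure
        ((integrable_dirac' c f).smul_measure hw)),
    integral_smul_measure, integral_dirac,
    integral_add_measure ((integrable_dirac' b f).smul_measure hv)
      ((integrable_dirac' c f).smul_measure hw),
    integral_smul_measure, integral_smul_measure, integral_dirac, integral_dirac]
  simp [smul_eq_mul]

lemma costCont (p : ℝ) (hp0 : 0 < p) :
    Continuous (fun z : ℝ≥0 × ℝ≥0 => dist z.1 z.2 ^ p) :=
  continuous_dist.rpow_const (fun _ => Or.inr hp0.le)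

lemma Wp_eq_of (p : ℝ) (hp0 : 0 < p) (μ ν : Measure ℝ≥0)
    [IsProbabilityMeasure μ] [IsProbabilityMeasure ν]
    (u₁ u₂ v₁ v₂ : ℝ≥0)
    (hμs : μ (({u₁, u₂} : Set ℝ≥0)ᶜ) = 0) (hνs : ν (({v₁, v₂} : Set ℝ≥0)ᶜ) = 0)
    (γ₀ : Measure (ℝ≥0 × ℝ≥0)) (hγ₀ : IsProbabilityMeasure γ₀)
    (h1 : γ₀.map Prod.fst = μ) (h2 : γ₀.map Prod.snd = ν)
    (T : ℝ) (hT : 0 ≤ T)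
    (hint : (∫ z : ℝ≥0 × ℝ≥0, dist z.1 z.2 ^ p ∂γ₀) = T)
    (φ ψ : ℝ≥0 → ℝ) (hφm : Measurable φ) (hψm : Measurable ψ)
    (Cφ Cψ : ℝ) (hφb : ∀ a, |φ a| ≤ Cφ) (hψb : ∀ a, |ψ a| ≤ Cψ)
    (hpt : ∀ a ∈ ({u₁, u₂} : Set ℝ≥0), ∀ b ∈ ({v₁, v₂} : Set ℝ≥0),
      φ a + ψ b ≤ dist a b ^ p)
    (hsum : (∫ a, φ a ∂μ) + (∫ b, ψ b ∂ν) = T) :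
    Wp (fun a b : ℝ≥0 => dist a b) p μ ν = T ^ (1 / p) := by
  have hmem : T ^ (1 / p) ∈ {c : ℝ | ∃ γ : Measure (ℝ≥0 × ℝ≥0), IsProbabilityMeasure γ ∧
      γ.map Prod.fst = μ ∧ γ.map Prod.snd = ν ∧
      c = (∫ z, dist z.1 z.2 ^ p ∂γ) ^ (1 / p)} := ⟨γ₀, hγ₀, h1, h2, by rw [hint]⟩
  have hlb : ∀ c ∈ {c : ℝ | ∃ γ : Measure (ℝ≥0 × ℝ≥0), IsProbabilityMeasure γ ∧
      γ.map Prod.fst = μ ∧ γ.map Prod.snd = ν ∧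
      c = (∫ z, dist z.1 z.2 ^ p ∂γ) ^ (1 / p)}, T ^ (1 / p) ≤ c := by
    rintro c ⟨γ, hγ, hγ1, hγ2, rfl⟩
    have hUm : MeasurableSet ({u₁, u₂} : Set ℝ≥0) :=
      (measurableSet_singleton u₂).insert u₁
    have hVm : MeasurableSet ({v₁, v₂} : Set ℝ≥0) :=
      (measurableSet_singleton v₂).insert v₁
    have haeU : ∀ᵐ z : ℝ≥0 × ℝ≥0 ∂γ, z.1 ∈ ({u₁, u₂} : Set ℝ≥0) := by
      rw [ae_iff]
      have : {z : ℝ≥0 × ℝ≥0 | ¬ z.1 ∈ ({u₁, u₂} : Set ℝ≥0)}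
          = Prod.fst ⁻¹' (({u₁, u₂} : Set ℝ≥0)ᶜ) := rfl
      rw [this, ← Measure.map_apply measurable_fst hUm.compl, hγ1, hμs]
    have haeV : ∀ᵐ z : ℝ≥0 × ℝ≥0 ∂γ, z.2 ∈ ({v₁, v₂} : Set ℝ≥0) := by
      rw [ae_iff]
      have : {z : ℝ≥0 × ℝ≥0 | ¬ z.2 ∈ ({v₁, v₂} : Set ℝ≥0)}
          = Prod.snd ⁻¹' (({v₁, v₂} : Set ℝ≥0)ᶜ) := rfl
      rw [this, ← Measure.map_apply measurable_snd hVm.compl, hγ2, hνs]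
    set M : ℝ := max (max (dist u₁ v₁ ^ p) (dist u₁ v₂ ^ p))
      (max (dist u₂ v₁ ^ p) (dist u₂ v₂ ^ p)) with hM
    have hIcost : Integrable (fun z : ℝ≥0 × ℝ≥0 => dist z.1 z.2 ^ p) γ := by
      refine Integrable.mono' (integrable_const M)
        (costCont p hp0).aestronglyMeasurable ?_
      filter_upwards [haeU, haeV] with z hz1 hz2
      rw [Real.norm_eq_abs, abs_of_nonneg (Real.rpow_nonneg dist_nonneg p)]
      simp only [mem_insert_iff, mem_singleton_iff] at hz1 hz2
      rcases hz1 with h1' | h1' <;> rcases hz2 with h2' | h2' <;> rw [h1', h2']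
      · exact le_max_of_le_left (le_max_left _ _)
      · exact le_max_of_le_left (le_max_right _ _)
      · exact le_max_of_le_right (le_max_left _ _)
      · exact le_max_of_le_right (le_max_right _ _)
    have hIφ : Integrable (fun z : ℝ≥0 × ℝ≥0 => φ z.1) γ := by
      refine Integrable.mono' (integrable_const Cφ)
        ((hφm.comp measurable_fst).aestronglyMeasurable) ?_
      exact Filter.Eventually.of_forall fun z => by simpa using hφb z.1
    have hIψ : Integrable (fun z : ℝ≥0 × ℝ≥0 => ψ z.2) γ := by
      refine Integrable.mono' (integrable_const Cψ)
        ((hψm.comp measurable_snd).aestronglyMeasurable) ?_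
      exact Filter.Eventually.of_forall fun z => by simpa using hψb z.2
    have key : T ≤ ∫ z : ℝ≥0 × ℝ≥0, dist z.1 z.2 ^ p ∂γ := by
      have hle : (∫ z : ℝ≥0 × ℝ≥0, (φ z.1 + ψ z.2) ∂γ)
          ≤ ∫ z : ℝ≥0 × ℝ≥0, dist z.1 z.2 ^ p ∂γ := by
        refine integral_mono_ae (hIφ.add hIψ) hIcost ?_
        filter_upwards [haeU, haeV] with z hz1 hz2
        exact hpt z.1 hz1 z.2 hz2
      have e1 : (∫ z : ℝ≥0 × ℝ≥0, φ z.1 ∂γ) = ∫ a, φ a ∂μ := by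
        rw [← hγ1, integral_map measurable_fst.aemeasurable
          hφm.aestronglyMeasurable]
      have e2 : (∫ z : ℝ≥0 × ℝ≥0, ψ z.2 ∂γ) = ∫ b, ψ b ∂ν := by
        rw [← hγ2, integral_map measurable_snd.aemeasurable
          hψm.aestronglyMeasurable]
      rw [integral_add hIφ hIψ, e1, e2, hsum] at hle
      exact hle
    exact Real.rpow_le_rpow hT key (by positivity)
  have hbdd : BddBelow {c : ℝ | ∃ γ : Measure (ℝ≥0 × ℝ≥0), IsProbabilityMeasure γ ∧
      γ.map Prod.fst = μ ∧ γ.map Prod.snd = ν ∧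
      c = (∫ z, dist z.1 z.2 ^ p ∂γ) ^ (1 / p)} := by
    refine ⟨0, ?_⟩
    rintro c ⟨γ, hγ, -, -, rfl⟩
    exact Real.rpow_nonneg (integral_nonneg fun z => Real.rpow_nonneg dist_nonneg p) _
  exact le_antisymm (csInf_le hbdd hmem) (le_csInf ⟨_, hmem⟩ hlb)

lemma invLeOne (p : ℝ) (x : ℝ≥0) (hp0 : 0 ≤ p) (hx : 1 ≤ (x : ℝ)) :
    (((x : ℝ) ^ p)⁻¹) ≤ 1 := by
  rw [inv_le_one_iff₀]; right; exact Real.one_le_rpow hx hp0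

lemma ofReal_le_one' (p : ℝ) (x : ℝ≥0) (hp0 : 0 ≤ p) (hx : 1 ≤ (x : ℝ)) :
    ENNReal.ofReal (((x : ℝ) ^ p)⁻¹) ≤ 1 := by
  rw [← ENNReal.ofReal_one]
  exact ENNReal.ofReal_le_ofReal (invLeOne p x hp0 hx)

lemma muX_prob (p : ℝ) (x : ℝ≥0) (hp0 : 0 ≤ p) (hx : 1 ≤ (x : ℝ)) :
    IsProbabilityMeasure (muX p x) := by
  constructor
  simp only [muX, Measure.add_apply, Measure.smul_apply, smul_eq_mul,
    Measure.dirac_apply' _ MeasurableSet.univ]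
  simp [tsub_add_cancel_of_le (ofReal_le_one' p x hp0 hx)]

lemma muX_compl (p : ℝ) (x : ℝ≥0) :
    muX p x (({0, x} : Set ℝ≥0)ᶜ) = 0 := by
  have hm : MeasurableSet (({0, x} : Set ℝ≥0)ᶜ) :=
    ((measurableSet_singleton x).insert 0).compl
  simp [muX, Measure.dirac_apply' _ hm, indicator_apply]

lemma integral_muX (p : ℝ) (x : ℝ≥0) (f : ℝ≥0 → ℝ) (hp0 : 0 ≤ p) (hx : 1 ≤ (x : ℝ)) :
    (∫ a, f a ∂(muX p x)) = (1 - ((x : ℝ) ^ p)⁻¹) * f 0 + ((x : ℝ) ^ p)⁻¹ * f x := by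
  have hinv : (0 : ℝ) ≤ ((x : ℝ) ^ p)⁻¹ := by positivity
  rw [muX, integral_two_point _ _ _ _ (by finiteness) ENNReal.ofReal_ne_top,
    ENNReal.toReal_sub_of_le (ofReal_le_one' p x hp0 hx) ENNReal.one_ne_top,
    ENNReal.toReal_ofReal hinv, ENNReal.toReal_one]

noncomputable def Ff (p : ℝ) (r : ℝ) : ℝ := (1 - (r ^ p)⁻¹) + (r ^ p)⁻¹ * (r - 1) ^ p

variable {p : ℝ}

lemma Ff_one (hp : 1 ≤ p) : Ff p 1 = 0 := by
  have hp0 : p ≠ 0 := by linarith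
  simp [Ff, Real.one_rpow, Real.zero_rpow hp0]

lemma Ff_div {r : ℝ} (hr : 1 ≤ r) :
    (r ^ p)⁻¹ * (r - 1) ^ p = ((r - 1) / r) ^ p := by
  rw [Real.div_rpow (by linarith) (by linarith), div_eq_inv_mul]

lemma Ff_nonneg (hp : 1 ≤ p) {r : ℝ} (hr : 1 ≤ r) : 0 ≤ Ff p r := by
  have h1 : (r ^ p)⁻¹ ≤ 1 := by
    rw [inv_le_one_iff₀]; right; exact Real.one_le_rpow hr (by linarith)
  have h2 : (0:ℝ) ≤ (r ^ p)⁻¹ * (r - 1) ^ p := by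
    have h3 : (0:ℝ) ≤ (r - 1) ^ p := Real.rpow_nonneg (by linarith) p
    have h4 : (0:ℝ) ≤ (r ^ p)⁻¹ := by positivity
    positivity
  unfold Ff; linarith

lemma Ff_strictMonoOn (hp : 1 ≤ p) : StrictMonoOn (Ff p) (Ici 1) := by
  intro a ha b hb hab
  simp only [mem_Ici] at ha hb
  have hp0 : (0:ℝ) < p := by linarith
  have h1 : 1 - (a ^ p)⁻¹ < 1 - (b ^ p)⁻¹ := by
    have hap : (0:ℝ) < a ^ p := Real.rpow_pos_of_pos (by linarith) p
    have h5 := Real.rpow_lt_rpow (by linarith : (0:ℝ) ≤ a) hab hp0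
    have : (b ^ p)⁻¹ < (a ^ p)⁻¹ := by
      apply inv_strictAnti₀ hap h5
    linarith
  have h2 : (a ^ p)⁻¹ * (a - 1) ^ p ≤ (b ^ p)⁻¹ * (b - 1) ^ p := by
    rw [Ff_div ha, Ff_div hb]
    apply Real.rpow_le_rpow (by
      have ha1 : (0:ℝ) ≤ a - 1 := by linarith
      have ha0 : (0:ℝ) < a := by linarith
      positivity) _ hp0.le
    rw [div_le_div_iff₀ (by linarith) (by linarith)]
    nlinarith
  unfold Ff; linarith

lemma Ff_tendsto (hp : 1 ≤ p) : Tendsto (Ff p) atTop (𝓝 2) := by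
  have hp0 : (0:ℝ) < p := by linarith
  have h1 : Tendsto (fun r : ℝ => (r ^ p)⁻¹) atTop (𝓝 0) :=
    (tendsto_rpow_atTop hp0).inv_tendsto_atTop
  have h2 : Tendsto (fun r : ℝ => ((r - 1) / r)) atTop (𝓝 1) := by
    have h6 : Tendsto (fun r : ℝ => 1 - r⁻¹) atTop (𝓝 (1 - 0)) :=
      tendsto_const_nhds.sub tendsto_inv_atTop_zero
    rw [sub_zero] at h6
    refine h6.congr' ?_
    filter_upwards [eventually_ge_atTop (1:ℝ)] with r hr
    field_simp
  have h3 : Tendsto (fun r : ℝ => ((r - 1) / r) ^ p) atTop (𝓝 1) := by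
    have hc : ContinuousAt (fun t : ℝ => t ^ p) 1 :=
      Real.continuousAt_rpow_const 1 p (Or.inl one_ne_zero)
    have := hc.tendsto.comp h2
    simpa [Real.one_rpow, Function.comp_def] using this
  have h4 : Tendsto (fun r : ℝ => (1 - (r ^ p)⁻¹) + ((r - 1) / r) ^ p) atTop (𝓝 2) := by
    have h5 : Tendsto (fun r : ℝ => (1 - (r ^ p)⁻¹) + ((r - 1) / r) ^ p) atTop
        (𝓝 ((1 - 0) + 1)) := (Tendsto.sub tendsto_const_nhds h1).add h3
    norm_num at h5
    exact h5
  refine h4.congr' ?_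
  filter_upwards [eventually_ge_atTop (1:ℝ)] with r hr
  rw [Ff, Ff_div hr]

lemma Ff_exists_unique (hp : 1 ≤ p) {s : ℝ} (hs0 : 0 ≤ s) (hs2 : s < 2) :
    ∃! r : ℝ, 1 ≤ r ∧ Ff p r = s := by
  have hp0 : (0:ℝ) < p := by linarith
  have hcont : ContinuousOn (Ff p) (Ici 1) := by
    have hc1 : Continuous fun r : ℝ => r ^ p :=
      continuous_id.rpow_const (fun _ => Or.inr hp0.le)
    have hc2 : Continuous fun r : ℝ => (r - 1) ^ p :=
      (continuous_id.sub continuous_const).rpow_const (fun _ => Or.inr hp0.le)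
    have hinv : ContinuousOn (fun r : ℝ => (r ^ p)⁻¹) (Ici 1) := by
      apply ContinuousOn.inv₀ hc1.continuousOn
      intro r hr
      exact ne_of_gt (Real.rpow_pos_of_pos (by simp at hr; linarith) p)
    exact (continuousOn_const.sub hinv).add (hinv.mul hc2.continuousOn)
  obtain ⟨X, hX1, hXs⟩ : ∃ X : ℝ, 1 ≤ X ∧ s ≤ Ff p X := by
    have hev : ∀ᶠ r in atTop, s < Ff p r :=
      (Ff_tendsto hp).eventually (eventually_gt_nhds hs2)
    obtain ⟨X, hX⟩ := (hev.and (eventually_ge_atTop (1:ℝ))).exists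
    exact ⟨X, hX.2, hX.1.le⟩
  have hmem : s ∈ Icc (Ff p 1) (Ff p X) := by
    rw [Ff_one hp]; exact ⟨hs0, hXs⟩
  obtain ⟨r, hr, hrs⟩ := intermediate_value_Icc hX1 (hcont.mono Icc_subset_Ici_self) hmem
  refine ⟨r, ⟨hr.1, hrs⟩, ?_⟩
  rintro y ⟨hy1, hys⟩
  exact (Ff_strictMonoOn hp).injOn (mem_Ici.mpr hy1) (mem_Ici.mpr hr.1)
    (by rw [hys, hrs])

end Aux

section Apps

lemma dist_nn (a b : ℝ≥0) : dist a b = |(a:ℝ) - (b:ℝ)| := NNReal.dist_eq a b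

lemma Wp_delta_muX (p : ℝ) (hp : 1 ≤ p) (x : ℝ≥0) (hx : 1 ≤ (x : ℝ)) :
    Wp (fun a b : ℝ≥0 => dist a b) p (Measure.dirac 1) (muX p x)
      = (Ff p (x : ℝ)) ^ (1 / p) := by
  have hp0 : (0:ℝ) < p := by linarith
  have hxne : (0 : ℝ≥0) ≠ x := by
    intro h; rw [← h] at hx; norm_num at hx
  set r : ℝ := (x : ℝ) with hr
  have hi0 : (0:ℝ) ≤ (r ^ p)⁻¹ := by positivity
  set t : ℝ≥0∞ := ENNReal.ofReal ((r ^ p)⁻¹) with ht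
  have ht1 : t ≤ 1 := ofReal_le_one' p x hp0.le hx
  have htne : t ≠ ⊤ := ENNReal.ofReal_ne_top
  haveI := muX_prob p x hp0.le hx
  set γ₀ : Measure (ℝ≥0 × ℝ≥0) :=
    (1 - t) • Measure.dirac ((1 : ℝ≥0), (0 : ℝ≥0)) + t • Measure.dirac (1, x) with hγ₀def
  have hγ₀ : IsProbabilityMeasure γ₀ := by
    constructor
    simp only [hγ₀def, Measure.add_apply, Measure.smul_apply, smul_eq_mul,
      Measure.dirac_apply' _ MeasurableSet.univ]
    simp [tsub_add_cancel_of_le ht1]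
  have hmfst : γ₀.map Prod.fst = Measure.dirac 1 := by
    rw [hγ₀def, Measure.map_add _ _ measurable_fst, Measure.map_smul, Measure.map_smul,
      Measure.map_dirac' measurable_fst, Measure.map_dirac' measurable_fst]
    show (1 - t) • Measure.dirac 1 + t • Measure.dirac 1 = Measure.dirac 1
    rw [← add_smul, tsub_add_cancel_of_le ht1, one_smul]
  have hmsnd : γ₀.map Prod.snd = muX p x := by
    rw [hγ₀def, Measure.map_add _ _ measurable_snd, Measure.map_smul, Measure.map_smul,
      Measure.map_dirac' measurable_snd, Measure.map_dirac' measurable_snd]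
    rfl
  have hd10 : dist (1:ℝ≥0) (0:ℝ≥0) = 1 := by rw [dist_nn]; norm_num
  have hd1x : dist (1:ℝ≥0) x = r - 1 := by
    rw [dist_nn, abs_of_nonpos (by push_cast; linarith)]; push_cast; ring
  have htr : (1 - t).toReal = 1 - (r ^ p)⁻¹ := by
    rw [ENNReal.toReal_sub_of_le ht1 ENNReal.one_ne_top, ht,
      ENNReal.toReal_ofReal hi0, ENNReal.toReal_one]
  have htr2 : t.toReal = (r ^ p)⁻¹ := by rw [ht, ENNReal.toReal_ofReal hi0]
  have hint : (∫ z : ℝ≥0 × ℝ≥0, dist z.1 z.2 ^ p ∂γ₀) = Ff p r := by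
    rw [hγ₀def, integral_two_point _ _ _ _ (by finiteness) htne]
    show (1 - t).toReal * dist (1:ℝ≥0) (0:ℝ≥0) ^ p + t.toReal * dist (1:ℝ≥0) x ^ p = _
    rw [htr, htr2, hd10, hd1x, Real.one_rpow, Ff]
    ring
  set ψ : ℝ≥0 → ℝ := fun b => if b = x then (r - 1) ^ p else 1 with hψ
  have hψm : Measurable ψ := by
    apply Measurable.ite _ measurable_const measurable_const
    simpa [Set.setOf_eq_eq_singleton] using measurableSet_singleton x
  have hψb : ∀ b, |ψ b| ≤ max ((r - 1) ^ p) 1 := by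
    intro b
    simp only [hψ]
    split
    · rw [abs_of_nonneg (Real.rpow_nonneg (by linarith) p)]; exact le_max_left _ _
    · rw [abs_one]; exact le_max_right _ _
  have hpt : ∀ a ∈ ({1, 1} : Set ℝ≥0), ∀ b ∈ ({0, x} : Set ℝ≥0),
      (fun _ : ℝ≥0 => (0:ℝ)) a + ψ b ≤ dist a b ^ p := by
    intro a ha b hb
    simp only [Set.mem_insert_iff, Set.mem_singleton_iff, or_self] at ha
    subst ha
    simp only [Set.mem_insert_iff, Set.mem_singleton_iff] at hb
    rcases hb with hb | hb <;> subst hb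
    · simp only [hψ, if_neg (Ne.symm (Ne.symm hxne))]
      rw [hd10, Real.one_rpow]; norm_num
    · simp only [hψ, if_pos rfl]
      rw [hd1x]; norm_num
  have hsum : (∫ a, (fun _ : ℝ≥0 => (0:ℝ)) a ∂(Measure.dirac 1))
      + (∫ b, ψ b ∂(muX p x)) = Ff p r := by
    rw [integral_muX p x ψ hp0.le hx]
    simp only [hψ, if_neg (Ne.symm (Ne.symm hxne)), if_pos rfl]
    simp [Ff]; rfl
  have hμs : Measure.dirac (1:ℝ≥0) (({1, 1} : Set ℝ≥0)ᶜ) = 0 := by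
    rw [Measure.dirac_apply' _ (((measurableSet_singleton 1).insert 1).compl)]
    simp
  exact Wp_eq_of p hp0 _ _ 1 1 0 x hμs (muX_compl p x) γ₀ hγ₀ hmfst hmsnd
    (Ff p r) (Ff_nonneg hp hx) hint _ ψ measurable_const hψm
    0 (max ((r - 1) ^ p) 1) (by simp) hψb hpt hsum

lemma Wp_muX_delta (p : ℝ) (hp : 1 ≤ p) (x : ℝ≥0) (hx : 1 ≤ (x : ℝ)) :
    Wp (fun a b : ℝ≥0 => dist a b) p (muX p x) (Measure.dirac 1)
      = (Ff p (x : ℝ)) ^ (1 / p) := by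
  have hp0 : (0:ℝ) < p := by linarith
  have hxne : (0 : ℝ≥0) ≠ x := by
    intro h; rw [← h] at hx; norm_num at hx
  set r : ℝ := (x : ℝ) with hr
  have hi0 : (0:ℝ) ≤ (r ^ p)⁻¹ := by positivity
  set t : ℝ≥0∞ := ENNReal.ofReal ((r ^ p)⁻¹) with ht
  have ht1 : t ≤ 1 := ofReal_le_one' p x hp0.le hx
  have htne : t ≠ ⊤ := ENNReal.ofReal_ne_top
  haveI := muX_prob p x hp0.le hx
  set γ₀ : Measure (ℝ≥0 × ℝ≥0) :=
    (1 - t) • Measure.dirac ((0 : ℝ≥0), (1 : ℝ≥0)) + t • Measure.dirac (x, 1) with hγ₀def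
  have hγ₀ : IsProbabilityMeasure γ₀ := by
    constructor
    simp only [hγ₀def, Measure.add_apply, Measure.smul_apply, smul_eq_mul,
      Measure.dirac_apply' _ MeasurableSet.univ]
    simp [tsub_add_cancel_of_le ht1]
  have hmsnd : γ₀.map Prod.snd = Measure.dirac 1 := by
    rw [hγ₀def, Measure.map_add _ _ measurable_snd, Measure.map_smul, Measure.map_smul,
      Measure.map_dirac' measurable_snd, Measure.map_dirac' measurable_snd]
    show (1 - t) • Measure.dirac 1 + t • Measure.dirac 1 = Measure.dirac 1
    rw [← add_smul, tsub_add_cancel_of_le ht1, one_smul]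
  have hmfst : γ₀.map Prod.fst = muX p x := by
    rw [hγ₀def, Measure.map_add _ _ measurable_fst, Measure.map_smul, Measure.map_smul,
      Measure.map_dirac' measurable_fst, Measure.map_dirac' measurable_fst]
    rfl
  have hd10 : dist (0:ℝ≥0) (1:ℝ≥0) = 1 := by rw [dist_nn]; norm_num
  have hdx1 : dist x (1:ℝ≥0) = r - 1 := by
    rw [dist_nn, abs_of_nonneg (by push_cast; linarith)]; push_cast; ring
  have htr : (1 - t).toReal = 1 - (r ^ p)⁻¹ := by
    rw [ENNReal.toReal_sub_of_le ht1 ENNReal.one_ne_top, ht,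
      ENNReal.toReal_ofReal hi0, ENNReal.toReal_one]
  have htr2 : t.toReal = (r ^ p)⁻¹ := by rw [ht, ENNReal.toReal_ofReal hi0]
  have hint : (∫ z : ℝ≥0 × ℝ≥0, dist z.1 z.2 ^ p ∂γ₀) = Ff p r := by
    rw [hγ₀def, integral_two_point _ _ _ _ (by finiteness) htne]
    show (1 - t).toReal * dist (0:ℝ≥0) (1:ℝ≥0) ^ p + t.toReal * dist x (1:ℝ≥0) ^ p = _
    rw [htr, htr2, hd10, hdx1, Real.one_rpow, Ff]
    ring
  set φ : ℝ≥0 → ℝ := fun b => if b = x then (r - 1) ^ p else 1 with hφ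
  have hφm : Measurable φ := by
    apply Measurable.ite _ measurable_const measurable_const
    simpa [Set.setOf_eq_eq_singleton] using measurableSet_singleton x
  have hφb : ∀ b, |φ b| ≤ max ((r - 1) ^ p) 1 := by
    intro b
    simp only [hφ]
    split
    · rw [abs_of_nonneg (Real.rpow_nonneg (by linarith) p)]; exact le_max_left _ _
    · rw [abs_one]; exact le_max_right _ _
  have hpt : ∀ a ∈ ({0, x} : Set ℝ≥0), ∀ b ∈ ({1, 1} : Set ℝ≥0),
      φ a + (fun _ : ℝ≥0 => (0:ℝ)) b ≤ dist a b ^ p := by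
    intro a ha b hb
    simp only [Set.mem_insert_iff, Set.mem_singleton_iff, or_self] at hb
    subst hb
    simp only [Set.mem_insert_iff, Set.mem_singleton_iff] at ha
    rcases ha with ha | ha <;> subst ha
    · simp only [hφ, if_neg (Ne.symm (Ne.symm hxne))]
      rw [hd10, Real.one_rpow]; norm_num
    · simp only [hφ, if_pos rfl]
      rw [hdx1]; norm_num
  have hsum : (∫ a, φ a ∂(muX p x))
      + (∫ b, (fun _ : ℝ≥0 => (0:ℝ)) b ∂(Measure.dirac 1)) = Ff p r := by
    rw [integral_muX p x φ hp0.le hx]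
    simp only [hφ, if_neg (Ne.symm (Ne.symm hxne)), if_pos rfl]
    simp [Ff]; rfl
  have hνs : Measure.dirac (1:ℝ≥0) (({1, 1} : Set ℝ≥0)ᶜ) = 0 := by
    rw [Measure.dirac_apply' _ (((measurableSet_singleton 1).insert 1).compl)]
    simp
  exact Wp_eq_of p hp0 _ _ 0 x 1 1 (muX_compl p x) hνs γ₀ hγ₀ hmfst hmsnd
    (Ff p r) (Ff_nonneg hp hx) hint φ _ hφm measurable_const
    (max ((r - 1) ^ p) 1) 0 hφb (by simp) hpt hsum

end Apps

lemma Wp_muX_muX2 (p : ℝ) (hp : 1 ≤ p) (x : ℝ≥0) (hx : 1 < (x : ℝ)) :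
    Wp (fun a b : ℝ≥0 => dist a b) p (muX p x) (muX p (x ^ 2))
      = (Ff p (x : ℝ)) ^ (1 / p) := by
  have hp0 : (0:ℝ) < p := by linarith
  have hxne : (0 : ℝ≥0) ≠ x := by
    intro h; rw [← h] at hx; norm_num at hx
  have hyne : (0 : ℝ≥0) ≠ x ^ 2 := by
    intro h
    have : ((x:ℝ))^2 = 0 := by
      have := congrArg (fun z : ℝ≥0 => (z : ℝ)) h
      push_cast at this; linarith [this]
    nlinarith
  set r : ℝ := (x : ℝ) with hr
  have hr1 : 1 ≤ r := hx.le
  have r2c : ((x ^ 2 : ℝ≥0) : ℝ) = r ^ 2 := by push_cast; ring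
  have hr2ge : 1 ≤ r ^ 2 := by nlinarith
  have hrle : r ≤ r ^ 2 := by nlinarith
  have hrp0 : (0:ℝ) < r ^ p := Real.rpow_pos_of_pos (by linarith) p
  set i : ℝ := (r ^ p)⁻¹ with hi
  set j : ℝ := ((r ^ 2) ^ p)⁻¹ with hj
  have hi0 : (0:ℝ) ≤ i := by positivity
  have hj0 : (0:ℝ) ≤ j := by positivity
  have hji : j ≤ i := by
    rw [hi, hj]
    apply inv_anti₀ hrp0
    exact Real.rpow_le_rpow (by linarith) hrle hp0.le
  set tx : ℝ≥0∞ := ENNReal.ofReal i with htx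
  set ty : ℝ≥0∞ := ENNReal.ofReal j with hty
  have htx1 : tx ≤ 1 := ofReal_le_one' p x hp0.le hr1
  have htyx : ty ≤ tx := ENNReal.ofReal_le_ofReal hji
  have htxne : tx ≠ ⊤ := ENNReal.ofReal_ne_top
  have htyne : ty ≠ ⊤ := ENNReal.ofReal_ne_top
  have hty' : ENNReal.ofReal ((((x ^ 2 : ℝ≥0) : ℝ)) ^ p)⁻¹ = ty := by rw [r2c]
  haveI := muX_prob p x hp0.le hr1
  haveI := muX_prob p (x ^ 2) hp0.le (by rw [r2c]; exact hr2ge)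
  have hmul : (r ^ 2) ^ p = r ^ p * r ^ p := by
    rw [show r ^ 2 = r * r by ring, Real.mul_rpow (by linarith) (by linarith)]
  have e1 : i * r ^ p = 1 := inv_mul_cancel₀ (ne_of_gt hrp0)
  have e2 : j = i * i := by rw [hj, hi, hmul, mul_inv]
  have e3 : (r ^ 2 - r) ^ p = r ^ p * (r - 1) ^ p := by
    rw [show r ^ 2 - r = r * (r - 1) by ring,
      Real.mul_rpow (by linarith) (by linarith)]
  set γ₀ : Measure (ℝ≥0 × ℝ≥0) :=
    (1 - tx) • Measure.dirac ((0 : ℝ≥0), (0 : ℝ≥0)) +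
      ((tx - ty) • Measure.dirac (x, 0) + ty • Measure.dirac (x, x ^ 2)) with hγ₀def
  have hγ₀ : IsProbabilityMeasure γ₀ := by
    constructor
    simp only [hγ₀def, Measure.add_apply, Measure.smul_apply, smul_eq_mul,
      Measure.dirac_apply' _ MeasurableSet.univ]
    simp only [Set.indicator_univ, Pi.one_apply, mul_one]
    rw [tsub_add_cancel_of_le htyx, tsub_add_cancel_of_le htx1]
  have hmfst : γ₀.map Prod.fst = muX p x := by
    rw [hγ₀def, Measure.map_add _ _ measurable_fst, Measure.map_add _ _ measurable_fst,
      Measure.map_smul, Measure.map_smul, Measure.map_smul,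
      Measure.map_dirac' measurable_fst, Measure.map_dirac' measurable_fst,
      Measure.map_dirac' measurable_fst]
    show (1 - tx) • Measure.dirac 0 + ((tx - ty) • Measure.dirac x + ty • Measure.dirac x)
      = muX p x
    rw [← add_smul, tsub_add_cancel_of_le htyx]
    rfl
  have hmsnd : γ₀.map Prod.snd = muX p (x ^ 2) := by
    rw [hγ₀def, Measure.map_add _ _ measurable_snd, Measure.map_add _ _ measurable_snd,
      Measure.map_smul, Measure.map_smul, Measure.map_smul,
      Measure.map_dirac' measurable_snd, Measure.map_dirac' measurable_snd,
      Measure.map_dirac' measurable_snd]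
    show (1 - tx) • Measure.dirac 0 + ((tx - ty) • Measure.dirac 0
        + ty • Measure.dirac (x ^ 2)) = muX p (x ^ 2)
    rw [← add_assoc, ← add_smul, tsub_add_tsub_cancel htx1 htyx, muX, hty']
  have hd00 : dist (0:ℝ≥0) (0:ℝ≥0) = 0 := dist_self 0
  have hdx0 : dist x (0:ℝ≥0) = r := by
    rw [dist_nn, NNReal.coe_zero, sub_zero, abs_of_nonneg (by linarith)]
  have hd0y : dist (0:ℝ≥0) (x ^ 2) = r ^ 2 := by
    rw [dist_nn, NNReal.coe_zero, zero_sub, abs_neg, r2c, abs_of_nonneg (by nlinarith)]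
  have hdxy : dist x (x ^ 2) = r ^ 2 - r := by
    rw [dist_nn, r2c, abs_of_nonpos (by nlinarith)]; ring
  have htr1 : (1 - tx).toReal = 1 - i := by
    rw [ENNReal.toReal_sub_of_le htx1 ENNReal.one_ne_top, htx,
      ENNReal.toReal_ofReal hi0, ENNReal.toReal_one]
  have htr2 : (tx - ty).toReal = i - j := by
    rw [ENNReal.toReal_sub_of_le htyx htxne, htx, hty,
      ENNReal.toReal_ofReal hi0, ENNReal.toReal_ofReal hj0]
  have htr3 : ty.toReal = j := by rw [hty, ENNReal.toReal_ofReal hj0]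
  have hint : (∫ z : ℝ≥0 × ℝ≥0, dist z.1 z.2 ^ p ∂γ₀) = Ff p r := by
    rw [hγ₀def, integral_three_point _ _ _ _ _ _ (by finiteness) (by finiteness) htyne]
    show (1 - tx).toReal * dist (0:ℝ≥0) (0:ℝ≥0) ^ p
        + ((tx - ty).toReal * dist x (0:ℝ≥0) ^ p + ty.toReal * dist x (x ^ 2) ^ p) = _
    rw [htr1, htr2, htr3, hd00, hdx0, hdxy, Real.zero_rpow (ne_of_gt hp0), Ff]
    rw [e2, e3]
    linear_combination (1 - i + i * (r - 1) ^ p) * e1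
  set φ : ℝ≥0 → ℝ := fun a => if a = x then r ^ p else 0 with hφ
  set ψ : ℝ≥0 → ℝ := fun b => if b = x ^ 2 then (r ^ 2 - r) ^ p - r ^ p else 0 with hψ
  have hφm : Measurable φ := by
    apply Measurable.ite _ measurable_const measurable_const
    simpa [Set.setOf_eq_eq_singleton] using measurableSet_singleton x
  have hψm : Measurable ψ := by
    apply Measurable.ite _ measurable_const measurable_const
    simpa [Set.setOf_eq_eq_singleton] using measurableSet_singleton (x ^ 2)
  have hφb : ∀ a, |φ a| ≤ |r ^ p| := by
    intro a; simp only [hφ]; split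
    · exact le_rfl
    · simp [abs_nonneg]
  have hψb : ∀ a, |ψ a| ≤ |(r ^ 2 - r) ^ p - r ^ p| := by
    intro a; simp only [hψ]; split
    · exact le_rfl
    · simp [abs_nonneg]
  have hpt : ∀ a ∈ ({0, x} : Set ℝ≥0), ∀ b ∈ ({0, x ^ 2} : Set ℝ≥0),
      φ a + ψ b ≤ dist a b ^ p := by
    intro a ha b hb
    simp only [Set.mem_insert_iff, Set.mem_singleton_iff] at ha hb
    have hle : (r ^ 2 - r) ^ p ≤ (r ^ 2) ^ p :=
      Real.rpow_le_rpow (by nlinarith) (by nlinarith) hp0.le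
    rcases ha with ha | ha <;> rcases hb with hb | hb <;> subst ha <;> subst hb
    · simp only [hφ, hψ, if_neg (Ne.symm (Ne.symm hxne)), if_neg (Ne.symm (Ne.symm hyne))]
      rw [hd00, Real.zero_rpow (ne_of_gt hp0)]; norm_num
    · simp only [hφ, hψ, if_neg (Ne.symm (Ne.symm hxne)), if_pos rfl]
      rw [hd0y]
      have h0p : (0:ℝ) ≤ r ^ p := hrp0.le
      linarith
    · simp only [hφ, hψ, if_pos rfl, if_neg (Ne.symm (Ne.symm hyne))]
      rw [hdx0]; norm_num
    · simp only [hφ, hψ, if_pos rfl, if_pos rfl]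
      rw [hdxy]; norm_num
  have hsum : (∫ a, φ a ∂(muX p x)) + (∫ b, ψ b ∂(muX p (x ^ 2))) = Ff p r := by
    rw [integral_muX p x φ hp0.le hr1,
      integral_muX p (x ^ 2) ψ hp0.le (by rw [r2c]; exact hr2ge)]
    simp only [hφ, hψ, if_neg (Ne.symm (Ne.symm hxne)), if_neg (Ne.symm (Ne.symm hyne)),
      if_pos rfl]
    rw [r2c, Ff]
    show (1 - i) * 0 + i * r ^ p + ((1 - j) * 0 + j * ((r ^ 2 - r) ^ p - r ^ p)) = _
    rw [e2, e3]
    linear_combination (1 - i + i * (r - 1) ^ p) * e1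
  exact Wp_eq_of p hp0 _ _ 0 x 0 (x ^ 2) (muX_compl p x) (muX_compl p (x ^ 2))
    γ₀ hγ₀ hmfst hmsnd (Ff p r) (Ff_nonneg hp hr1) hint φ ψ hφm hψm
    _ _ hφb hψb hpt hsum

/-- For every `s ∈ [0,2)` there is a unique `x ≥ 1` with `W_p^p(δ₁, μ_x) = s`;
moreover `W_p^p(μ_x, δ₁) = W_p^p(μ_x, μ_{x²})` for every `x > 1`. -/
theorem stmt_7 (p : ℝ) (hp : 1 ≤ p) :
    (∀ s : ℝ, 0 ≤ s → s < 2 →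
      ∃! x : ℝ≥0, 1 ≤ x ∧
        Wp (fun a b : ℝ≥0 => dist a b) p (Measure.dirac 1) (muX p x) ^ p = s) ∧
    (∀ x : ℝ≥0, 1 < x →
      Wp (fun a b : ℝ≥0 => dist a b) p (muX p x) (Measure.dirac 1) ^ p =
        Wp (fun a b : ℝ≥0 => dist a b) p (muX p x) (muX p (x ^ 2)) ^ p) := by
  have hp0 : (0:ℝ) < p := by linarith
  have hpow : ∀ T : ℝ, 0 ≤ T → (T ^ (1/p)) ^ p = T := by
    intro T hT
    rw [← Real.rpow_mul hT, one_div, inv_mul_cancel₀ (ne_of_gt hp0), Real.rpow_one]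
  constructor
  · intro s hs0 hs2
    obtain ⟨r, ⟨hr1, hrs⟩, huniq⟩ := Ff_exists_unique hp hs0 hs2
    have hr0 : (0:ℝ) ≤ r := by linarith
    have hc : ((Real.toNNReal r : ℝ≥0) : ℝ) = r := Real.coe_toNNReal r hr0
    refine ⟨Real.toNNReal r, ⟨?_, ?_⟩, ?_⟩
    · rw [← NNReal.coe_le_coe, hc]; exact_mod_cast hr1
    · rw [Wp_delta_muX p hp _ (by rw [hc]; exact hr1), hc,
        hpow _ (Ff_nonneg hp hr1), hrs]
    · rintro y ⟨hy1, hys⟩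
      have hy1' : 1 ≤ ((y : ℝ≥0) : ℝ) := by exact_mod_cast hy1
      rw [Wp_delta_muX p hp y hy1', hpow _ (Ff_nonneg hp hy1')] at hys
      have hyr : (y : ℝ) = r := huniq _ ⟨hy1', hys⟩
      apply NNReal.coe_injective
      rw [hyr, hc]
  · intro x hx
    have hx' : 1 < (x : ℝ) := by exact_mod_cast hx
    rw [Wp_muX_delta p hp x hx'.le, Wp_muX_muX2 p hp x hx']
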